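/- arXiv:1511.08139 — 2 statements merged into one kernel-verified Lean document; each statement's English description precedes it below -/
import Mathlib

section
/- With the setup below, the c-fold iterated commutator subgroup [SR,_cF] is contained in R, and there is a group isomorphism M^{(c)}(G,N) = (R ∩ [SR,_cF])/[R,_cF] ≅ ([S,_cF]·[T,_cF]·γ_{c+2}(F)) / ([T,_cF]·γ_{c+2}(F)), the latter being a quotient of subgroups of F (the denominator is a normal subgroup of the numerator). -/
open Subgroup

/-- `itComm X Y c` is the `c`-fold iterated commutator subgroup
`[X,_c Y] = ⁅…⁅⁅X,Y⁆,Y⁆,…,Y⁆` (with `c` copies of `Y`); `itComm X Y 0 = X`. -/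
def itComm {P : Type*} [Group P] (X Y : Subgroup P) : ℕ → Subgroup P
  | 0 => X
  | c + 1 => ⁅itComm X Y c, Y⁆

instance itComm_normal {P : Type*} [Group P] (X Y : Subgroup P) [hX : X.Normal] [hY : Y.Normal]
    (c : ℕ) : (itComm X Y c).Normal := by
  induction c with
  | zero => exact hX
  | succ c ih => exact Subgroup.commutator_normal _ _

/-- The free group `F` on `m + n` generators `y_1,…,y_m,x_1,…,x_n`:
the first `m` generators (`Fin.castAdd n i`) are the `y_i`,
the last `n` generators (`Fin.natAdd m j`) are the `x_j`. -/
abbrev Fg (m n : ℕ) : Type := FreeGroup (Fin (m + n))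

/-- `T`, the normal closure in `F` of `{x_1^{r_1},…,x_n^{r_n}}`. -/
abbrev Tsub (m n : ℕ) (r : Fin n → ℕ) : Subgroup (Fg m n) :=
  Subgroup.normalClosure {w | ∃ j : Fin n, w = FreeGroup.of (Fin.natAdd m j) ^ r j}

/-- `S`, the normal closure in `F` of `{y_1,…,y_l,x_1,…,x_t}`. -/
abbrev Ssub (m n l t : ℕ) : Subgroup (Fg m n) :=
  Subgroup.normalClosure
    ({w | ∃ i : Fin m, (i : ℕ) < l ∧ w = FreeGroup.of (Fin.castAdd n i)} ∪
      {w | ∃ j : Fin n, (j : ℕ) < t ∧ w = FreeGroup.of (Fin.natAdd m j)})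

/-- `R = T·γ_2(F)` (note `γ_2(F) = lowerCentralSeries F 1`). -/
abbrev Rsub (m n : ℕ) (r : Fin n → ℕ) : Subgroup (Fg m n) :=
  Tsub m n r ⊔ (⊤ : Subgroup (Fg m n)).lowerCentralSeries 1

section AuxLemmas
variable {P : Type*} [Group P]
open scoped commutatorElement

lemma commutator_sup_left' (H K L : Subgroup P) [H.Normal] [K.Normal] [L.Normal] :
    ⁅H ⊔ K, L⁆ = ⁅H, L⁆ ⊔ ⁅K, L⁆ := by
  refine le_antisymm ?_ (sup_le (Subgroup.commutator_mono le_sup_left le_rfl)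
    (Subgroup.commutator_mono le_sup_right le_rfl))
  rw [Subgroup.commutator_le]
  intro g hg q hq
  rw [← SetLike.mem_coe, Subgroup.mul_normal] at hg
  · obtain ⟨h, hh, k, hk, rfl⟩ := hg
    have key : ⁅h * k, q⁆ = h * ⁅k, q⁆ * h⁻¹ * ⁅h, q⁆ := by
      simp only [commutatorElement_def]; group
    rw [key]
    exact mul_mem
      (Subgroup.mem_sup_right
        ((Subgroup.commutator_normal K L).conj_mem _ (Subgroup.commutator_mem_commutator hk hq) h))
      (Subgroup.mem_sup_left (Subgroup.commutator_mem_commutator hh hq))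

lemma itComm_mono {X Y : Subgroup P} (h : X ≤ Y) (c : ℕ) : itComm X ⊤ c ≤ itComm Y ⊤ c := by
  induction c with
  | zero => exact h
  | succ c ih => exact Subgroup.commutator_mono ih le_rfl

lemma itComm_sup (H K : Subgroup P) [H.Normal] [K.Normal] (c : ℕ) :
    itComm (H ⊔ K) ⊤ c = itComm H ⊤ c ⊔ itComm K ⊤ c := by
  induction c with
  | zero => rfl
  | succ c ih =>
    show ⁅itComm (H ⊔ K) ⊤ c, ⊤⁆ = ⁅itComm H ⊤ c, ⊤⁆ ⊔ ⁅itComm K ⊤ c, ⊤⁆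
    rw [ih]
    exact commutator_sup_left' _ _ _

lemma itComm_lcs (k c : ℕ) : itComm ((⊤ : Subgroup P).lowerCentralSeries k) ⊤ c = (⊤ : Subgroup P).lowerCentralSeries (k + c) := by
  induction c with
  | zero => rfl
  | succ c ih =>
    show ⁅itComm ((⊤ : Subgroup P).lowerCentralSeries k) ⊤ c, ⊤⁆ = (⊤ : Subgroup P).lowerCentralSeries (k + c + 1)
    rw [ih]
    rfl

lemma itComm_le_left (X : Subgroup P) [X.Normal] (c : ℕ) : itComm X ⊤ c ≤ X := by
  induction c with
  | zero => exact le_rfl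
  | succ c ih => exact le_trans (Subgroup.commutator_le_left _ _) ih

lemma itComm_le_lcs (X : Subgroup P) (c : ℕ) (hc : 1 ≤ c) :
    itComm X ⊤ c ≤ (⊤ : Subgroup P).lowerCentralSeries 1 := by
  calc itComm X ⊤ c ≤ itComm (⊤ : Subgroup P) ⊤ c := itComm_mono le_top c
    _ = (⊤ : Subgroup P).lowerCentralSeries (0 + c) := itComm_lcs 0 c
    _ ≤ (⊤ : Subgroup P).lowerCentralSeries 1 := by
        apply Subgroup.lowerCentralSeries_antitone
        omega

end AuxLemmas

/-- With `m = l + s`, `F` the free group on `y_1,…,y_m,x_1,…,x_n`, `T` the normal closure of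
`{x_j^{r_j}}`, `S` the normal closure of `{y_1,…,y_l,x_1,…,x_t}` and `R = T·γ_2(F)` (so that
`F/R ≅ G = N ⊕ K` with `SR/R` corresponding to `N`): the `c`-fold iterated commutator
`[SR,_c F]` is contained in `R`; the subgroup `[T,_c F]·γ_{c+2}(F)` is a (normal) subgroup of
`[S,_c F]·[T,_c F]·γ_{c+2}(F)`; and
`M^{(c)}(G,N) = (R ∩ [SR,_c F])/[R,_c F] ≅ ([S,_c F]·[T,_c F]·γ_{c+2}(F))/([T,_c F]·γ_{c+2}(F))`. -/


theorem multiplier_of_pair_as_quotient (c l s t n : ℕ) (hc : 1 ≤ c) (htn : t ≤ n)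
    (r : Fin n → ℕ) (hr : ∀ j, 0 < r j) (hdvd : ∀ j k : Fin n, j ≤ k → r j ∣ r k) :
    itComm (Ssub (l+s) n l t ⊔ Rsub (l+s) n r) ⊤ c ≤ Rsub (l+s) n r ∧
    itComm (Tsub (l+s) n r) ⊤ c ⊔ (⊤ : Subgroup (Fg (l+s) n)).lowerCentralSeries (c+1) ≤
      itComm (Ssub (l+s) n l t) ⊤ c ⊔ itComm (Tsub (l+s) n r) ⊤ c ⊔
        (⊤ : Subgroup (Fg (l+s) n)).lowerCentralSeries (c+1) ∧
    Nonempty (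
      ((Rsub (l+s) n r ⊓ itComm (Ssub (l+s) n l t ⊔ Rsub (l+s) n r) ⊤ c :
          Subgroup (Fg (l+s) n)) ⧸
        (itComm (Rsub (l+s) n r) ⊤ c).subgroupOf
          (Rsub (l+s) n r ⊓ itComm (Ssub (l+s) n l t ⊔ Rsub (l+s) n r) ⊤ c)) ≃*
      ((itComm (Ssub (l+s) n l t) ⊤ c ⊔ itComm (Tsub (l+s) n r) ⊤ c ⊔
          (⊤ : Subgroup (Fg (l+s) n)).lowerCentralSeries (c+1) : Subgroup (Fg (l+s) n)) ⧸
        (itComm (Tsub (l+s) n r) ⊤ c ⊔ (⊤ : Subgroup (Fg (l+s) n)).lowerCentralSeries (c+1)).subgroupOf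
          (itComm (Ssub (l+s) n l t) ⊤ c ⊔ itComm (Tsub (l+s) n r) ⊤ c ⊔
            (⊤ : Subgroup (Fg (l+s) n)).lowerCentralSeries (c+1)))) := by
  have hRc : itComm (Rsub (l+s) n r) ⊤ c =
      itComm (Tsub (l+s) n r) ⊤ c ⊔ (⊤ : Subgroup (Fg (l+s) n)).lowerCentralSeries (c+1) := by
    rw [itComm_sup, itComm_lcs, Nat.add_comm 1 c]
  have hSRc : itComm (Ssub (l+s) n l t ⊔ Rsub (l+s) n r) ⊤ c =
      itComm (Ssub (l+s) n l t) ⊤ c ⊔ itComm (Tsub (l+s) n r) ⊤ c ⊔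
        (⊤ : Subgroup (Fg (l+s) n)).lowerCentralSeries (c+1) := by
    rw [itComm_sup, hRc, sup_assoc]
  have hle : itComm (Ssub (l+s) n l t ⊔ Rsub (l+s) n r) ⊤ c ≤ Rsub (l+s) n r := by
    rw [hSRc]
    refine sup_le (sup_le ?_ ?_) ?_
    · exact le_sup_right.trans' (itComm_le_lcs _ c hc)
    · exact le_sup_left.trans' (itComm_le_left _ c)
    · exact le_sup_right.trans' (Subgroup.lowerCentralSeries_antitone ⊤ (by omega))
  refine ⟨hle, sup_le (le_sup_left.trans' le_sup_right) le_sup_right, ?_⟩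
  have hnum : Rsub (l+s) n r ⊓ itComm (Ssub (l+s) n l t ⊔ Rsub (l+s) n r) ⊤ c =
      itComm (Ssub (l+s) n l t) ⊤ c ⊔ itComm (Tsub (l+s) n r) ⊤ c ⊔
        (⊤ : Subgroup (Fg (l+s) n)).lowerCentralSeries (c+1) := by
    rw [inf_eq_right.mpr hle, hSRc]
  rw [hnum]
  exact ⟨QuotientGroup.quotientMulEquivOfEq (by rw [hRc])⟩
end

section
/- Let (G,N) be a pair of finite groups which is nilpotent of class t (i.e. [N,_tG] = 1 and [N,_{t−1}G] ≠ 1), with t ≥ c+1. Then |[N,_{t−1}G]| · |M^{(c)}(G,N)| divides |M^{(c)}(G/[N,_{t−1}G], N/[N,_{t−1}G])| · |⊗^{c+1}([N,_{t−1}G], G/Z_{t−1}(N,G))|. -/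
open Subgroup
open scoped commutatorElement

/-- The abelianization of a group, written additively. -/
abbrev AbOf (A : Type) [Group A] : Type := Additive (Abelianization A)

/-- Iterated tensor product `M ⊗ B ⊗ ⋯ ⊗ B` (with `c` factors `B`) of `ℤ`-modules. -/
noncomputable def iterTensor (M B : ModuleCat ℤ) : ℕ → ModuleCat ℤ
  | 0 => M
  | c + 1 => ModuleCat.of ℤ (TensorProduct ℤ (iterTensor M B c) B)

/-- `⊗^{c+1}(A, B) = A^{ab} ⊗_ℤ B^{ab} ⊗_ℤ ⋯ ⊗_ℤ B^{ab}` with `c` factors `B^{ab}`. -/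
noncomputable def tensorPair (A B : Type) [Group A] [Group B] (c : ℕ) : ModuleCat ℤ :=
  iterTensor (ModuleCat.of ℤ (AbOf A)) (ModuleCat.of ℤ (AbOf B)) c

/-- `M^{(c)}(G,N) = (R ∩ [S,_c F]) / [R,_c F]`, where `R = ker π` and `S = π⁻¹(N)`,
relative to the free presentation `π : F ↠ G`. -/
def McPair {F G : Type} [Group F] [Group G] (π : F →* G) (N : Subgroup G) (c : ℕ) : Type :=
  (π.ker ⊓ itComm (N.comap π) ⊤ c : Subgroup F) ⧸
    (itComm π.ker ⊤ c).subgroupOf (π.ker ⊓ itComm (N.comap π) ⊤ c)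

noncomputable instance {F G : Type} [Group F] [Group G] (π : F →* G) (N : Subgroup G) (c : ℕ) :
    Group (McPair π N c) :=
  inferInstanceAs (Group ((π.ker ⊓ itComm (N.comap π) ⊤ c : Subgroup F) ⧸
    (itComm π.ker ⊤ c).subgroupOf (π.ker ⊓ itComm (N.comap π) ⊤ c)))

/-- `M^{(c)}(G/K, N/K) = (T ∩ [S,_c F]) / [T,_c F]`, where `T = π⁻¹(K)` and `S = π⁻¹(N)`,
relative to the free presentation `π : F ↠ G`. -/
def McPairQuot {F G : Type} [Group F] [Group G] (π : F →* G) (N K : Subgroup G) (c : ℕ) :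
    Type :=
  (K.comap π ⊓ itComm (N.comap π) ⊤ c : Subgroup F) ⧸
    (itComm (K.comap π) ⊤ c).subgroupOf (K.comap π ⊓ itComm (N.comap π) ⊤ c)

noncomputable instance {F G : Type} [Group F] [Group G] (π : F →* G) (N K : Subgroup G)
    [K.Normal] (c : ℕ) : Group (McPairQuot π N K c) :=
  inferInstanceAs (Group ((K.comap π ⊓ itComm (N.comap π) ⊤ c : Subgroup F) ⧸
    (itComm (K.comap π) ⊤ c).subgroupOf (K.comap π ⊓ itComm (N.comap π) ⊤ c)))

/-- `Z_j(N,G) = {n ∈ N : [n,g_1,…,g_j] = 1 for all g_1,…,g_j ∈ G}`, the `j`-th relative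
centre of the pair `(G,N)`; it equals `N ∩ Z_j(G)` where `Z_j(G)` is the upper central
series of `G`. -/
def relCenter {G : Type} [Group G] (N : Subgroup G) (j : ℕ) : Subgroup G :=
  N ⊓ Subgroup.upperCentralSeries G j

instance relCenter_normal {G : Type} [Group G] (N : Subgroup G) [N.Normal] (j : ℕ) :
    (relCenter N j).Normal :=
  inferInstanceAs ((N ⊓ Subgroup.upperCentralSeries G j).Normal)


section Aux
variable {F : Type*} [Group F]

/-- Three subgroups lemma with normal target. -/
theorem tsl {M H K L : Subgroup F} [M.Normal]
    (h1 : ⁅⁅H, K⁆, L⁆ ≤ M) (h2 : ⁅⁅K, L⁆, H⁆ ≤ M) : ⁅⁅L, H⁆, K⁆ ≤ M := by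
  have key : ∀ A B C : Subgroup F, ⁅⁅A, B⁆, C⁆ ≤ M ↔
      ⁅⁅map (QuotientGroup.mk' M) A, map (QuotientGroup.mk' M) B⁆,
        map (QuotientGroup.mk' M) C⁆ = ⊥ := by
    intro A B C
    rw [← Subgroup.map_commutator, ← Subgroup.map_commutator, Subgroup.map_eq_bot_iff,
      QuotientGroup.ker_mk']
  rw [key] at h1 h2 ⊢
  exact Subgroup.commutator_commutator_eq_bot_of_rotate h1 h2

theorem sup_comm_le {M H K L : Subgroup F} [M.Normal]
    (h1 : ⁅H, L⁆ ≤ M) (h2 : ⁅K, L⁆ ≤ M) : ⁅H ⊔ K, L⁆ ≤ M := by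
  have key : ∀ A : Subgroup F, ⁅A, L⁆ ≤ M ↔
      map (QuotientGroup.mk' M) A ≤ centralizer (map (QuotientGroup.mk' M) L) := by
    intro A
    rw [← Subgroup.commutator_eq_bot_iff_le_centralizer, ← Subgroup.map_commutator,
      Subgroup.map_eq_bot_iff, QuotientGroup.ker_mk']
  rw [key] at h1 h2 ⊢
  rw [Subgroup.map_sup]
  exact sup_le h1 h2

theorem comm_sup_le {M H K L : Subgroup F} [M.Normal]
    (h1 : ⁅L, H⁆ ≤ M) (h2 : ⁅L, K⁆ ≤ M) : ⁅L, H ⊔ K⁆ ≤ M := by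
  rw [Subgroup.commutator_comm] at h1 h2 ⊢
  exact sup_comm_le h1 h2

end Aux

section ItComm
variable {F : Type*} [Group F]

@[simp] theorem itComm_zero (X : Subgroup F) : itComm X ⊤ 0 = X := rfl
theorem itComm_succ (X : Subgroup F) (n : ℕ) : itComm X ⊤ (n + 1) = ⁅itComm X ⊤ n, ⊤⁆ := rfl

theorem itComm_mono_s8 {X X' : Subgroup F} (h : X ≤ X') (n : ℕ) :
    itComm X ⊤ n ≤ itComm X' ⊤ n := by
  induction n with
  | zero => exact h
  | succ n ih => exact Subgroup.commutator_mono ih le_rfl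

theorem itComm_succ_le (X : Subgroup F) [X.Normal] (n : ℕ) :
    itComm X ⊤ (n + 1) ≤ itComm X ⊤ n := by
  induction n with
  | zero => exact Subgroup.commutator_le_left X ⊤
  | succ n ih => exact Subgroup.commutator_mono ih le_rfl

theorem itComm_le_itComm (X : Subgroup F) [X.Normal] {a b : ℕ} (h : a ≤ b) :
    itComm X ⊤ b ≤ itComm X ⊤ a := by
  induction b with
  | zero => simpa [Nat.le_zero.mp h]
  | succ b ih =>
    rcases Nat.lt_or_ge a (b+1) with hb | hb
    · exact (itComm_succ_le X b).trans (ih (Nat.lt_succ_iff.mp hb))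
    · have : a = b + 1 := le_antisymm h hb
      simp [this]

theorem itComm_le_self (X : Subgroup F) [X.Normal] (n : ℕ) : itComm X ⊤ n ≤ X :=
  itComm_le_itComm X (Nat.zero_le n)

theorem itComm_comm_any_le (X : Subgroup F) (L : Subgroup F) (n : ℕ) :
    ⁅itComm X ⊤ n, L⁆ ≤ itComm X ⊤ (n + 1) :=
  Subgroup.commutator_mono le_rfl le_top

theorem map_itComm {G : Type*} [Group G] (π : F →* G) (hπ : Function.Surjective π)
    (X : Subgroup F) (n : ℕ) : map π (itComm X ⊤ n) = itComm (map π X) ⊤ n := by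
  induction n with
  | zero => rfl
  | succ n ih =>
    rw [itComm_succ, Subgroup.map_commutator, ih, Subgroup.map_top_of_surjective π hπ,
      itComm_succ]

theorem map_itComm_comap {G : Type*} [Group G] (π : F →* G) (hπ : Function.Surjective π)
    (N : Subgroup G) (n : ℕ) : map π (itComm (N.comap π) ⊤ n) = itComm N ⊤ n := by
  rw [map_itComm π hπ, Subgroup.map_comap_eq_self_of_surjective hπ]

end ItComm

section G
variable {G : Type} [Group G]

theorem uc_step : ∀ j : ℕ, ⁅Subgroup.upperCentralSeries G j, ⊤⁆ ≤ Subgroup.upperCentralSeries G (j - 1)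
  | 0 => by
    rw [Subgroup.upperCentralSeries_zero]
    simp [Subgroup.commutator_bot_left]
  | (j+1) => by
    rw [Subgroup.commutator_le]
    intro x hx y _
    simpa [commutatorElement_def] using (Subgroup.mem_upperCentralSeries_succ_iff.mp hx y)

theorem gl (N : Subgroup G) [N.Normal] :
    ∀ a j : ℕ, ⁅itComm N ⊤ a, Subgroup.upperCentralSeries G j⁆ ≤ Subgroup.upperCentralSeries G (j - (a + 1)) := by
  intro a
  induction a with
  | zero =>
    intro j
    calc ⁅itComm N ⊤ 0, Subgroup.upperCentralSeries G j⁆ ≤ ⁅Subgroup.upperCentralSeries G j, ⊤⁆ := by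
          rw [Subgroup.commutator_comm]; exact Subgroup.commutator_mono le_rfl le_top
      _ ≤ Subgroup.upperCentralSeries G (j - 1) := uc_step j
  | succ a ih =>
    intro j
    show ⁅⁅itComm N ⊤ a, ⊤⁆, Subgroup.upperCentralSeries G j⁆ ≤ _
    have h1 : ⁅⁅(⊤ : Subgroup G), Subgroup.upperCentralSeries G j⁆, itComm N ⊤ a⁆ ≤
        Subgroup.upperCentralSeries G (j - (a + 2)) := by
      calc ⁅⁅(⊤ : Subgroup G), Subgroup.upperCentralSeries G j⁆, itComm N ⊤ a⁆
          ≤ ⁅Subgroup.upperCentralSeries G (j-1), itComm N ⊤ a⁆ := by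
            apply Subgroup.commutator_mono _ le_rfl
            rw [Subgroup.commutator_comm]; exact uc_step j
        _ = ⁅itComm N ⊤ a, Subgroup.upperCentralSeries G (j-1)⁆ := Subgroup.commutator_comm _ _
        _ ≤ Subgroup.upperCentralSeries G ((j-1) - (a+1)) := ih (j-1)
        _ = Subgroup.upperCentralSeries G (j - (a+2)) := congrArg _ (by omega)
    have h2 : ⁅⁅Subgroup.upperCentralSeries G j, itComm N ⊤ a⁆, (⊤ : Subgroup G)⁆ ≤
        Subgroup.upperCentralSeries G (j - (a + 2)) := by
      calc ⁅⁅Subgroup.upperCentralSeries G j, itComm N ⊤ a⁆, (⊤ : Subgroup G)⁆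
          ≤ ⁅Subgroup.upperCentralSeries G (j - (a+1)), ⊤⁆ := by
            apply Subgroup.commutator_mono _ le_rfl
            rw [Subgroup.commutator_comm]; exact ih j
        _ ≤ Subgroup.upperCentralSeries G (j - (a+1) - 1) := uc_step _
        _ = Subgroup.upperCentralSeries G (j - (a+2)) := congrArg _ (by omega)
    exact tsl h1 h2

theorem relCenter_step (N : Subgroup G) [N.Normal] (k : ℕ) :
    ⁅relCenter N (k + 1), ⊤⁆ ≤ relCenter N k := by
  apply le_inf
  · exact (Subgroup.commutator_le_left _ _).trans inf_le_left
  · calc ⁅relCenter N (k+1), ⊤⁆ ≤ ⁅Subgroup.upperCentralSeries G (k+1), ⊤⁆ :=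
        Subgroup.commutator_mono inf_le_right le_rfl
      _ ≤ Subgroup.upperCentralSeries G k := by simpa using uc_step (G := G) (k+1)

end G

theorem itCongr {F : Type*} [Group F] (X : Subgroup F) {a b : ℕ} (h : a = b) :
    itComm X ⊤ a = itComm X ⊤ b := by rw [h]

theorem hall {F : Type*} [Group F] (R' S' : Subgroup F) [R'.Normal] :
    ∀ b a : ℕ, ⁅itComm R' ⊤ a, itComm S' ⊤ b⁆ ≤ itComm R' ⊤ (a + b + 1) := by
  intro b
  induction b with
  | zero =>
    intro a
    calc ⁅itComm R' ⊤ a, itComm S' ⊤ 0⁆ ≤ ⁅itComm R' ⊤ a, ⊤⁆ :=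
          Subgroup.commutator_mono le_rfl le_top
      _ = itComm R' ⊤ (a + 1) := rfl
      _ = itComm R' ⊤ (a + 0 + 1) := itCongr R' (by omega)
  | succ b ih =>
    intro a
    rw [Subgroup.commutator_comm]
    show ⁅⁅itComm S' ⊤ b, ⊤⁆, itComm R' ⊤ a⁆ ≤ _
    have h1 : ⁅⁅(⊤ : Subgroup F), itComm R' ⊤ a⁆, itComm S' ⊤ b⁆ ≤
        itComm R' ⊤ (a + (b+1) + 1) := by
      calc ⁅⁅(⊤ : Subgroup F), itComm R' ⊤ a⁆, itComm S' ⊤ b⁆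
          ≤ ⁅itComm R' ⊤ (a+1), itComm S' ⊤ b⁆ := by
            apply Subgroup.commutator_mono _ le_rfl
            rw [Subgroup.commutator_comm]
            exact Subgroup.commutator_mono le_rfl le_top
        _ ≤ itComm R' ⊤ ((a+1) + b + 1) := ih (a+1)
        _ = itComm R' ⊤ (a + (b+1) + 1) := itCongr R' (by omega)
    have h2 : ⁅⁅itComm R' ⊤ a, itComm S' ⊤ b⁆, (⊤ : Subgroup F)⁆ ≤
        itComm R' ⊤ (a + (b+1) + 1) := by
      calc ⁅⁅itComm R' ⊤ a, itComm S' ⊤ b⁆, (⊤ : Subgroup F)⁆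
          ≤ ⁅itComm R' ⊤ (a + b + 1), ⊤⁆ := Subgroup.commutator_mono (ih a) le_rfl
        _ = itComm R' ⊤ (a + b + 2) := rfl
        _ = itComm R' ⊤ (a + (b+1) + 1) := itCongr R' (by omega)
    exact tsl h1 h2


section SZ
variable {G F : Type} [Group G] [Group F] (π : F →* G)
  (N : Subgroup G) [N.Normal]

theorem y_zero : (relCenter N 0).comap π = π.ker := by
  have : relCenter N 0 = ⊥ := by
    simp [relCenter, Subgroup.upperCentralSeries_zero]
  rw [this]
  exact π.comap_bot

theorem y_step (hπ : Function.Surjective π) (k : ℕ) :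
    ⁅(relCenter N (k+1)).comap π, ⊤⁆ ≤ (relCenter N k).comap π := by
  rw [← Subgroup.map_le_iff_le_comap, Subgroup.map_commutator,
    Subgroup.map_comap_eq_self_of_surjective hπ, Subgroup.map_top_of_surjective π hπ]
  exact relCenter_step N k

theorem xk_y_succ (hπ : Function.Surjective π) (k : ℕ) :
    ⁅itComm (N.comap π) ⊤ k, (relCenter N (k+1)).comap π⁆ ≤ π.ker := by
  rw [← Subgroup.map_eq_bot_iff, ← le_bot_iff, Subgroup.map_commutator,
    map_itComm_comap π hπ, Subgroup.map_comap_eq_self_of_surjective hπ]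
  calc ⁅itComm N ⊤ k, relCenter N (k+1)⁆ ≤ ⁅itComm N ⊤ k, Subgroup.upperCentralSeries G (k+1)⁆ :=
        Subgroup.commutator_mono le_rfl inf_le_right
    _ ≤ Subgroup.upperCentralSeries G ((k+1) - (k+1)) := gl N k (k+1)
    _ = ⊥ := by simp [Subgroup.upperCentralSeries_zero]

theorem sz (hπ : Function.Surjective π) : ∀ k d : ℕ,
    ⁅itComm (N.comap π) ⊤ (k + d), (relCenter N k).comap π⁆ ≤ itComm π.ker ⊤ (d + 1) := by
  intro k
  induction k with
  | zero =>
    intro d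
    rw [y_zero, Subgroup.commutator_comm, itCongr (N.comap π) (Nat.zero_add d)]
    exact (hall π.ker (N.comap π) d 0).trans (le_of_eq (itCongr π.ker (by omega)))
  | succ k ihk =>
    intro d
    induction d with
    | zero =>
      show ⁅itComm (N.comap π) ⊤ (k + 1 + 0), (relCenter N (k+1)).comap π⁆ ≤ itComm π.ker ⊤ 1
      rw [itCongr (N.comap π) (show k + 1 + 0 = k + 1 by omega)]
      show ⁅⁅itComm (N.comap π) ⊤ k, ⊤⁆, (relCenter N (k+1)).comap π⁆ ≤ _
      have h1 : ⁅⁅(⊤ : Subgroup F), (relCenter N (k+1)).comap π⁆, itComm (N.comap π) ⊤ k⁆ ≤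
          itComm π.ker ⊤ 1 := by
        calc ⁅⁅(⊤ : Subgroup F), (relCenter N (k+1)).comap π⁆, itComm (N.comap π) ⊤ k⁆
            ≤ ⁅(relCenter N k).comap π, itComm (N.comap π) ⊤ k⁆ := by
              apply Subgroup.commutator_mono _ le_rfl
              rw [Subgroup.commutator_comm]
              exact y_step π N hπ k
          _ = ⁅itComm (N.comap π) ⊤ k, (relCenter N k).comap π⁆ := Subgroup.commutator_comm _ _
          _ ≤ itComm π.ker ⊤ (0 + 1) := by
              have := ihk 0
              rwa [itCongr (N.comap π) (show k + 0 = k by omega)] at this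
      have h2 : ⁅⁅(relCenter N (k+1)).comap π, itComm (N.comap π) ⊤ k⁆, (⊤ : Subgroup F)⁆ ≤
          itComm π.ker ⊤ 1 := by
        calc ⁅⁅(relCenter N (k+1)).comap π, itComm (N.comap π) ⊤ k⁆, (⊤ : Subgroup F)⁆
            ≤ ⁅π.ker, ⊤⁆ := by
              apply Subgroup.commutator_mono _ le_rfl
              rw [Subgroup.commutator_comm]
              exact xk_y_succ π N hπ k
          _ = itComm π.ker ⊤ 1 := rfl
      exact tsl h1 h2
    | succ d ihd =>
      rw [itCongr (N.comap π) (show k + 1 + (d + 1) = (k + 1 + d) + 1 by omega)]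
      show ⁅⁅itComm (N.comap π) ⊤ (k+1+d), ⊤⁆, (relCenter N (k+1)).comap π⁆ ≤ _
      have h1 : ⁅⁅(⊤ : Subgroup F), (relCenter N (k+1)).comap π⁆, itComm (N.comap π) ⊤ (k+1+d)⁆ ≤
          itComm π.ker ⊤ (d + 2) := by
        calc ⁅⁅(⊤ : Subgroup F), (relCenter N (k+1)).comap π⁆, itComm (N.comap π) ⊤ (k+1+d)⁆
            ≤ ⁅(relCenter N k).comap π, itComm (N.comap π) ⊤ (k+1+d)⁆ := by
              apply Subgroup.commutator_mono _ le_rfl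
              rw [Subgroup.commutator_comm]
              exact y_step π N hπ k
          _ = ⁅itComm (N.comap π) ⊤ (k + (d+1)), (relCenter N k).comap π⁆ := by
              rw [Subgroup.commutator_comm, itCongr (N.comap π) (show k+1+d = k + (d+1) by omega)]
          _ ≤ itComm π.ker ⊤ (d + 2) := ihk (d+1)
      have h2 : ⁅⁅(relCenter N (k+1)).comap π, itComm (N.comap π) ⊤ (k+1+d)⁆,
          (⊤ : Subgroup F)⁆ ≤ itComm π.ker ⊤ (d + 2) := by
        calc ⁅⁅(relCenter N (k+1)).comap π, itComm (N.comap π) ⊤ (k+1+d)⁆, (⊤ : Subgroup F)⁆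
            ≤ ⁅itComm π.ker ⊤ (d+1), ⊤⁆ := by
              apply Subgroup.commutator_mono _ le_rfl
              rw [Subgroup.commutator_comm]
              exact ihd
          _ = itComm π.ker ⊤ (d + 2) := rfl
      exact tsl h1 h2

end SZ


section Main
variable {G F : Type} [Group G] [Group F] (π : F →* G)
  (N : Subgroup G) [N.Normal]

theorem ker_abOf {Q : Type*} [Group Q] : (Abelianization.of (G := Q)).ker = commutator Q := by
  ext x
  show (QuotientGroup.mk x : Q ⧸ commutator Q) = 1 ↔ x ∈ commutator Q
  exact QuotientGroup.eq_one_iff x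

theorem hTtop (hπ : Function.Surjective π) {t : ℕ} (ht1 : 1 ≤ t)
    (hnil : itComm N ⊤ t = ⊥) :
    ⁅(itComm N ⊤ (t-1)).comap π, ⊤⁆ ≤ π.ker := by
  rw [← Subgroup.map_eq_bot_iff, Subgroup.map_commutator,
    Subgroup.map_comap_eq_self_of_surjective hπ, Subgroup.map_top_of_surjective π hπ]
  have : ⁅itComm N ⊤ (t-1), (⊤ : Subgroup G)⁆ = itComm N ⊤ t := by
    rw [← itComm_succ, itCongr N (show t - 1 + 1 = t by omega)]
  rw [this, hnil]

theorem dE (hπ : Function.Surjective π) {t : ℕ} (ht1 : 1 ≤ t)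
    (hnil : itComm N ⊤ t = ⊥) :
    ∀ j : ℕ, itComm ((itComm N ⊤ (t-1)).comap π) ⊤ (j+1) ≤ itComm π.ker ⊤ j := by
  intro j
  induction j with
  | zero => exact hTtop π N hπ ht1 hnil
  | succ j ih => exact Subgroup.commutator_mono ih le_rfl

theorem dDec (hπ : Function.Surjective π) (t : ℕ) :
    ∀ j : ℕ, itComm ((itComm N ⊤ (t-1)).comap π) ⊤ j ≤
      itComm (N.comap π) ⊤ (t-1+j) ⊔ itComm π.ker ⊤ j := by
  intro j
  induction j with
  | zero =>
    show (itComm N ⊤ (t-1)).comap π ≤ itComm (N.comap π) ⊤ (t-1+0) ⊔ π.ker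
    rw [itCongr (N.comap π) (show t-1+0 = t-1 by omega), ← map_itComm_comap π hπ N (t-1),
      ← Subgroup.comap_map_eq]
  | succ j ih =>
    calc itComm ((itComm N ⊤ (t-1)).comap π) ⊤ (j+1)
        ≤ ⁅itComm (N.comap π) ⊤ (t-1+j) ⊔ itComm π.ker ⊤ j, ⊤⁆ :=
          Subgroup.commutator_mono ih le_rfl
      _ ≤ itComm (N.comap π) ⊤ (t-1+(j+1)) ⊔ itComm π.ker ⊤ (j+1) := by
          apply sup_comm_le
          · exact le_trans (itComm_comm_any_le _ _ _) le_sup_left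
          · exact le_trans (itComm_comm_any_le _ _ _) le_sup_right

theorem dcomm (hπ : Function.Surjective π) {t : ℕ} (ht1 : 1 ≤ t)
    (hnil : itComm N ⊤ t = ⊥) (j : ℕ) :
    ⁅itComm ((itComm N ⊤ (t-1)).comap π) ⊤ j,
      (commutator F ⊔ (relCenter N (t-1)).comap π) ⊔ π.ker⁆ ≤ itComm π.ker ⊤ (j+1) := by
  set T := (itComm N ⊤ (t-1)).comap π with hT
  apply comm_sup_le
  · apply comm_sup_le
    · -- commutator F part
      rw [commutator_def, Subgroup.commutator_comm]
      have h1 : ⁅⁅(⊤ : Subgroup F), itComm T ⊤ j⁆, ⊤⁆ ≤ itComm π.ker ⊤ (j+1) := by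
        calc ⁅⁅(⊤ : Subgroup F), itComm T ⊤ j⁆, ⊤⁆ = ⁅⁅itComm T ⊤ j, ⊤⁆, ⊤⁆ := by
              rw [Subgroup.commutator_comm (⊤ : Subgroup F)]
          _ = itComm T ⊤ (j+2) := rfl
          _ ≤ itComm π.ker ⊤ (j+1) := dE π N hπ ht1 hnil (j+1)
      have h2 : ⁅⁅itComm T ⊤ j, ⊤⁆, (⊤ : Subgroup F)⁆ ≤ itComm π.ker ⊤ (j+1) :=
        h1.trans' (le_of_eq (by rw [Subgroup.commutator_comm (⊤ : Subgroup F)]))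
      exact tsl h1 h2
    · -- Y part
      calc ⁅itComm T ⊤ j, (relCenter N (t-1)).comap π⁆
          ≤ ⁅itComm (N.comap π) ⊤ (t-1+j) ⊔ itComm π.ker ⊤ j,
              (relCenter N (t-1)).comap π⁆ :=
            Subgroup.commutator_mono (dDec π N hπ t j) le_rfl
        _ ≤ itComm π.ker ⊤ (j+1) := by
            apply sup_comm_le
            · exact sz π N hπ (t-1) j
            · exact itComm_comm_any_le _ _ _
  · -- ker part
    calc ⁅itComm T ⊤ j, π.ker⁆
        ≤ ⁅itComm (N.comap π) ⊤ (t-1+j) ⊔ itComm π.ker ⊤ j, π.ker⁆ :=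
          Subgroup.commutator_mono (dDec π N hπ t j) le_rfl
      _ ≤ itComm π.ker ⊤ (j+1) := by
          apply sup_comm_le
          · rw [Subgroup.commutator_comm]
            exact (hall π.ker (N.comap π) (t-1+j) 0).trans
              (itComm_le_itComm π.ker (by omega))
          · exact itComm_comm_any_le _ _ _

theorem ker_mu (hπ : Function.Surjective π) (t : ℕ) :
    (Abelianization.of.comp ((QuotientGroup.mk' (relCenter N (t-1))).comp π)).ker =
      (commutator F ⊔ (relCenter N (t-1)).comap π) ⊔ π.ker := by
  set Z' := relCenter N (t-1)
  rw [← MonoidHom.comap_ker, ← Subgroup.comap_comap, ker_abOf]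
  have h1 : commutator (G ⧸ Z') = map (QuotientGroup.mk' Z') (commutator G) := by
    rw [commutator_def, commutator_def, Subgroup.map_commutator,
      Subgroup.map_top_of_surjective _ (QuotientGroup.mk'_surjective Z')]
  rw [h1, Subgroup.comap_map_eq, QuotientGroup.ker_mk']
  have h2 : commutator G ⊔ Z' = map π (commutator F ⊔ Z'.comap π) := by
    rw [Subgroup.map_sup, Subgroup.map_comap_eq_self_of_surjective hπ,
      commutator_def, commutator_def, Subgroup.map_commutator,
      Subgroup.map_top_of_surjective π hπ]
  rw [h2, Subgroup.comap_map_eq]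

end Main


section PartII
variable {F : Type} [Group F] (T' R' : Subgroup F) [T'.Normal] [R'.Normal]

def Vq (j : ℕ) : Type := (itComm T' ⊤ j) ⧸ ((itComm R' ⊤ j).subgroupOf (itComm T' ⊤ j))

instance (j : ℕ) : Group (Vq T' R' j) :=
  inferInstanceAs (Group ((itComm T' ⊤ j) ⧸ ((itComm R' ⊤ j).subgroupOf (itComm T' ⊤ j))))

def Aq (j : ℕ) : Type := Abelianization (Vq T' R' j)

instance (j : ℕ) : CommGroup (Aq T' R' j) := inferInstanceAs (CommGroup (Abelianization _))

def toAq (j : ℕ) : ↥(itComm T' ⊤ j) →* Aq T' R' j :=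
  Abelianization.of.comp (QuotientGroup.mk' _)

theorem abOf_surjective {Q : Type*} [Group Q] :
    Function.Surjective (Abelianization.of (G := Q)) :=
  fun a => QuotientGroup.induction_on a fun z => ⟨z, rfl⟩

theorem toAq_surjective (j : ℕ) : Function.Surjective (toAq T' R' j) := by
  have : ⇑(toAq T' R' j) = ⇑(Abelianization.of (G := Vq T' R' j)) ∘ ⇑(QuotientGroup.mk'
      ((itComm R' ⊤ j).subgroupOf (itComm T' ⊤ j))) := rfl
  rw [this]
  exact Function.Surjective.comp abOf_surjective (QuotientGroup.mk'_surjective _)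

theorem toAq_eq (j : ℕ) {x y : ↥(itComm T' ⊤ j)} (h : (x : F)⁻¹ * y ∈ itComm R' ⊤ j) :
    toAq T' R' j x = toAq T' R' j y := by
  show Abelianization.of (QuotientGroup.mk' _ x) = Abelianization.of (QuotientGroup.mk' _ y)
  congr 1
  simp only [QuotientGroup.mk'_apply]
  exact QuotientGroup.eq.mpr (by simpa [Subgroup.mem_subgroupOf] using h)

theorem toAq_eq_one (j : ℕ) {x : ↥(itComm T' ⊤ j)} (h : (x : F) ∈ itComm R' ⊤ j) :
    toAq T' R' j x = 1 := by
  have := toAq_eq T' R' j (x := x) (y := 1) (by simpa using inv_mem h)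
  rw [this, map_one]

theorem vdE (hT : ⁅T', ⊤⁆ ≤ R') : ∀ j : ℕ, itComm T' ⊤ (j+1) ≤ itComm R' ⊤ j := by
  intro j
  induction j with
  | zero => exact hT
  | succ j ih => exact Subgroup.commutator_mono ih le_rfl

def cElt (j : ℕ) (f : F) (x : ↥(itComm T' ⊤ j)) : ↥(itComm T' ⊤ (j+1)) :=
  ⟨⁅(x : F), f⁆, Subgroup.commutator_mem_commutator x.2 (Subgroup.mem_top f)⟩

theorem comm_with_next (hT : ⁅T', ⊤⁆ ≤ R') (j : ℕ) {w : F}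
    (hw : w ∈ itComm T' ⊤ (j+1)) (x : F) : ⁅x, w⁆ ∈ itComm R' ⊤ (j+1) := by
  have h1 : ⁅x, w⁆ ∈ ⁅(⊤ : Subgroup F), itComm R' ⊤ j⁆ :=
    Subgroup.commutator_mem_commutator (Subgroup.mem_top x) (vdE T' R' hT j hw)
  rwa [Subgroup.commutator_comm] at h1

theorem cElt_mul (hT : ⁅T', ⊤⁆ ≤ R') (j : ℕ) (f : F) (x y : ↥(itComm T' ⊤ j)) :
    toAq T' R' (j+1) (cElt T' j f (x * y)) =
      toAq T' R' (j+1) (cElt T' j f x) * toAq T' R' (j+1) (cElt T' j f y) := by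
  rw [← map_mul]
  apply toAq_eq
  have hu : (⁅(x : F), f⁆) ∈ itComm T' ⊤ (j+1) :=
    Subgroup.commutator_mem_commutator x.2 (Subgroup.mem_top f)
  have hw : (⁅(y : F), f⁆) ∈ itComm T' ⊤ (j+1) :=
    Subgroup.commutator_mem_commutator y.2 (Subgroup.mem_top f)
  have hxw : ⁅(x : F), ⁅(y : F), f⁆⁆ ∈ itComm R' ⊤ (j+1) := comm_with_next T' R' hT j hw _
  have hwu : ⁅(⁅(y : F), f⁆)⁻¹, (⁅(x : F), f⁆)⁻¹⁆ ∈ itComm R' ⊤ (j+1) := by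
    have h1 : ⁅(⁅(y : F), f⁆)⁻¹, (⁅(x : F), f⁆)⁻¹⁆ ∈ ⁅itComm R' ⊤ j, (⊤ : Subgroup F)⁆ :=
      Subgroup.commutator_mem_commutator (inv_mem (vdE T' R' hT j hw)) (Subgroup.mem_top _)
    exact h1
  have hconj : ((⁅(x : F), f⁆ * ⁅(y : F), f⁆)⁻¹ * ⁅(x : F), ⁅(y : F), f⁆⁆ *
      (⁅(x : F), f⁆ * ⁅(y : F), f⁆)) ∈ itComm R' ⊤ (j+1) := by
    have := (itComm_normal R' ⊤ (j+1)).conj_mem _ hxw (⁅(x : F), f⁆ * ⁅(y : F), f⁆)⁻¹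
    simpa [mul_assoc] using this
  have key : ((cElt T' j f (x * y) : F))⁻¹ * ((cElt T' j f x : F) * (cElt T' j f y : F)) =
      (((⁅(x : F), f⁆ * ⁅(y : F), f⁆)⁻¹ * ⁅(x : F), ⁅(y : F), f⁆⁆ *
        (⁅(x : F), f⁆ * ⁅(y : F), f⁆)) * ⁅(⁅(y : F), f⁆)⁻¹, (⁅(x : F), f⁆)⁻¹⁆)⁻¹ := by
    show (⁅(x : F) * (y : F), f⁆)⁻¹ * (⁅(x : F), f⁆ * ⁅(y : F), f⁆) = _
    simp only [commutatorElement_def]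
    group
  simp only [MulMemClass.coe_mul]
  rw [key]
  exact inv_mem (mul_mem hconj hwu)

theorem cElt_fmul (hT : ⁅T', ⊤⁆ ≤ R') (j : ℕ) (f g : F) (x : ↥(itComm T' ⊤ j)) :
    toAq T' R' (j+1) (cElt T' j (f * g) x) =
      toAq T' R' (j+1) (cElt T' j f x) * toAq T' R' (j+1) (cElt T' j g x) := by
  rw [← map_mul]
  apply toAq_eq
  have hw : (⁅(x : F), g⁆) ∈ itComm T' ⊤ (j+1) :=
    Subgroup.commutator_mem_commutator x.2 (Subgroup.mem_top g)
  have hfw : ⁅f, (⁅(x : F), g⁆)⁻¹⁆ ∈ itComm R' ⊤ (j+1) := by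
    have h1 : ⁅f, (⁅(x : F), g⁆)⁻¹⁆ ∈ ⁅(⊤ : Subgroup F), itComm R' ⊤ j⁆ :=
      Subgroup.commutator_mem_commutator (Subgroup.mem_top f) (inv_mem (vdE T' R' hT j hw))
    rwa [Subgroup.commutator_comm] at h1
  have key : ((cElt T' j (f * g) x : F))⁻¹ * ((cElt T' j f x : F) * (cElt T' j g x : F)) =
      ⁅f, (⁅(x : F), g⁆)⁻¹⁆ := by
    show (⁅(x : F), f * g⁆)⁻¹ * (⁅(x : F), f⁆ * ⁅(x : F), g⁆) = _
    simp only [commutatorElement_def]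
    group
  simp only [MulMemClass.coe_mul]
  rw [key]
  exact hfw

def innerHom (hT : ⁅T', ⊤⁆ ≤ R') (j : ℕ) (f : F) : Aq T' R' j →* Aq T' R' (j+1) :=
  Abelianization.lift (QuotientGroup.lift _
    (MonoidHom.mk' (fun x => toAq T' R' (j+1) (cElt T' j f x)) (cElt_mul T' R' hT j f))
    (by
      intro z hz
      show toAq T' R' (j+1) (cElt T' j f z) = 1
      apply toAq_eq_one
      show ⁅(z : F), f⁆ ∈ itComm R' ⊤ (j+1)
      have h1 : ⁅(z : F), f⁆ ∈ ⁅itComm R' ⊤ j, (⊤ : Subgroup F)⁆ :=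
        Subgroup.commutator_mem_commutator hz (Subgroup.mem_top f)
      exact h1))

theorem innerHom_apply (hT : ⁅T', ⊤⁆ ≤ R') (j : ℕ) (f : F) (x : ↥(itComm T' ⊤ j)) :
    innerHom T' R' hT j f (toAq T' R' j x) = toAq T' R' (j+1) (cElt T' j f x) := rfl

end PartII


section PartIIb
variable {F : Type} [Group F] (T' R' : Subgroup F) [T'.Normal] [R'.Normal]

def PhiF (hT : ⁅T', ⊤⁆ ≤ R') (j : ℕ) : F →* (Aq T' R' j →* Aq T' R' (j+1)) :=
  MonoidHom.mk' (fun f => innerHom T' R' hT j f) (by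
    intro f g
    apply MonoidHom.ext
    intro a
    obtain ⟨x, rfl⟩ := toAq_surjective T' R' j a
    rw [MonoidHom.mul_apply, innerHom_apply, innerHom_apply, innerHom_apply]
    exact cElt_fmul T' R' hT j f g x)

variable {W' : Type} [CommGroup W'] (μ : F →* W')

noncomputable def PhiBar (hμ : Function.Surjective μ) (hT : ⁅T', ⊤⁆ ≤ R') (j : ℕ)
    (hker : ⁅itComm T' ⊤ j, μ.ker⁆ ≤ itComm R' ⊤ (j+1)) :
    W' →* (Aq T' R' j →* Aq T' R' (j+1)) :=
  (QuotientGroup.lift μ.ker (PhiF T' R' hT j) (by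
    intro f hf
    apply MonoidHom.ext
    intro a
    obtain ⟨x, rfl⟩ := toAq_surjective T' R' j a
    show innerHom T' R' hT j f (toAq T' R' j x) = (1 : Aq T' R' j →* Aq T' R' (j+1)) _
    rw [innerHom_apply, MonoidHom.one_apply]
    apply toAq_eq_one
    exact hker (Subgroup.commutator_mem_commutator x.2 hf))).comp
    (QuotientGroup.quotientKerEquivOfSurjective μ hμ).symm.toMonoidHom

theorem PhiBar_mu (hμ : Function.Surjective μ) (hT : ⁅T', ⊤⁆ ≤ R') (j : ℕ)
    (hker : ⁅itComm T' ⊤ j, μ.ker⁆ ≤ itComm R' ⊤ (j+1)) (f : F) :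
    PhiBar T' R' μ hμ hT j hker (μ f) = innerHom T' R' hT j f := by
  have he : (QuotientGroup.quotientKerEquivOfSurjective μ hμ) (QuotientGroup.mk f) = μ f :=
    QuotientGroup.kerLift_mk μ f
  have he2 : (QuotientGroup.quotientKerEquivOfSurjective μ hμ).symm (μ f) =
      QuotientGroup.mk f := by
    rw [← he, MulEquiv.symm_apply_apply]
  unfold PhiBar
  rw [MonoidHom.comp_apply]
  have he3 : (QuotientGroup.quotientKerEquivOfSurjective μ hμ).symm.toMonoidHom (μ f) =
      QuotientGroup.mk f := he2
  rw [he3]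
  rfl

noncomputable def stepLin (hμ : Function.Surjective μ) (hT : ⁅T', ⊤⁆ ≤ R') (j : ℕ)
    (hker : ⁅itComm T' ⊤ j, μ.ker⁆ ≤ itComm R' ⊤ (j+1)) :
    Additive (Aq T' R' j) →ₗ[ℤ] (Additive W' →ₗ[ℤ] Additive (Aq T' R' (j+1))) :=
  AddMonoidHom.toIntLinearMap <| AddMonoidHom.mk'
    (fun v => AddMonoidHom.toIntLinearMap <| AddMonoidHom.mk'
      (fun w => Additive.ofMul (PhiBar T' R' μ hμ hT j hker (Additive.toMul w)
        (Additive.toMul v)))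
      (by
        intro w1 w2
        show Additive.ofMul ((PhiBar T' R' μ hμ hT j hker) (Additive.toMul w1 *
          Additive.toMul w2) (Additive.toMul v)) = _
        rw [map_mul, MonoidHom.mul_apply]
        rfl))
    (by
      intro v1 v2
      apply LinearMap.ext
      intro w
      show Additive.ofMul ((PhiBar T' R' μ hμ hT j hker) (Additive.toMul w)
        (Additive.toMul v1 * Additive.toMul v2)) = _
      rw [map_mul]
      rfl)

theorem partII_step (hμ : Function.Surjective μ) (hT : ⁅T', ⊤⁆ ≤ R') (j : ℕ)
    (hker : ⁅itComm T' ⊤ j, μ.ker⁆ ≤ itComm R' ⊤ (j+1))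
    {TP : Type*} [AddCommGroup TP] [Module ℤ TP]
    (φ : TP →ₗ[ℤ] Additive (Aq T' R' j)) (hφ : Function.Surjective φ) :
    ∃ ψ : (TensorProduct ℤ TP (Additive W')) →ₗ[ℤ] Additive (Aq T' R' (j+1)),
      Function.Surjective ψ := by
  refine ⟨TensorProduct.lift ((stepLin T' R' μ hμ hT j hker).comp φ), ?_⟩
  set ψ := TensorProduct.lift ((stepLin T' R' μ hμ hT j hker).comp φ) with hψ
  intro a
  obtain ⟨x, hx⟩ := toAq_surjective T' R' (j+1) (Additive.toMul a)
  suffices h : ∃ z, ψ z = Additive.ofMul (toAq T' R' (j+1) x) by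
    rw [hx] at h
    simpa using h
  clear hx
  have hx2 : (x : F) ∈ ⁅itComm T' ⊤ j, (⊤ : Subgroup F)⁆ := x.2
  rw [Subgroup.commutator_def] at hx2
  have main : ∀ (g : F), g ∈ Subgroup.closure {x_1 | ∃ g₁ ∈ itComm T' ⊤ j,
      ∃ g₂ ∈ (⊤ : Subgroup F), ⁅g₁, g₂⁆ = x_1} →
      ∃ hg : g ∈ itComm T' ⊤ (j+1), ∃ z, ψ z =
        Additive.ofMul (toAq T' R' (j+1) ⟨g, hg⟩) := by
    intro g hg
    induction hg using Subgroup.closure_induction with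
    | mem y hy =>
      obtain ⟨g₁, hg₁, g₂, _, rfl⟩ := hy
      have hmem : ⁅g₁, g₂⁆ ∈ itComm T' ⊤ (j+1) :=
        Subgroup.commutator_mem_commutator hg₁ (Subgroup.mem_top g₂)
      refine ⟨hmem, ?_⟩
      obtain ⟨zp, hzp⟩ := hφ (Additive.ofMul (toAq T' R' j ⟨g₁, hg₁⟩))
      refine ⟨zp ⊗ₜ (Additive.ofMul (μ g₂)), ?_⟩
      rw [hψ, TensorProduct.lift.tmul]
      show Additive.ofMul ((PhiBar T' R' μ hμ hT j hker) (μ g₂) (Additive.toMul (φ zp))) = _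
      rw [hzp, PhiBar_mu]
      show Additive.ofMul (innerHom T' R' hT j g₂ (toAq T' R' j ⟨g₁, hg₁⟩)) = _
      rw [innerHom_apply]
      rfl
    | one =>
      refine ⟨one_mem _, 0, ?_⟩
      have : (⟨(1 : F), one_mem _⟩ : ↥(itComm T' ⊤ (j+1))) = 1 := rfl
      rw [map_zero, this, map_one]
      rfl
    | mul y z hy hz ihy ihz =>
      obtain ⟨hy', zy, hzy⟩ := ihy
      obtain ⟨hz', zz, hzz⟩ := ihz
      refine ⟨mul_mem hy' hz', zy + zz, ?_⟩
      have : (⟨y * z, mul_mem hy' hz'⟩ : ↥(itComm T' ⊤ (j+1))) =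
        ⟨y, hy'⟩ * ⟨z, hz'⟩ := rfl
      rw [map_add, hzy, hzz, this, map_mul]
      rfl
    | inv y hy ihy =>
      obtain ⟨hy', zy, hzy⟩ := ihy
      refine ⟨inv_mem hy', -zy, ?_⟩
      have : (⟨y⁻¹, inv_mem hy'⟩ : ↥(itComm T' ⊤ (j+1))) = (⟨y, hy'⟩)⁻¹ := rfl
      rw [map_neg, hzy, this, map_inv]
      rfl
  obtain ⟨hg, z, hz⟩ := main (x : F) hx2
  exact ⟨z, by rwa [show (⟨(x : F), hg⟩ : ↥(itComm T' ⊤ (j+1))) = x from Subtype.ext rfl] at hz⟩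

theorem partII_all (hμ : Function.Surjective μ) (hT : ⁅T', ⊤⁆ ≤ R')
    (hker : ∀ j : ℕ, ⁅itComm T' ⊤ j, μ.ker⁆ ≤ itComm R' ⊤ (j+1))
    (M0 : ModuleCat ℤ) (φ0 : M0 →ₗ[ℤ] Additive (Aq T' R' 0)) (h0 : Function.Surjective φ0) :
    ∀ j : ℕ, ∃ φ : (iterTensor M0 (ModuleCat.of ℤ (Additive W')) j) →ₗ[ℤ]
      Additive (Aq T' R' j), Function.Surjective φ := by
  intro j
  induction j with
  | zero => exact ⟨φ0, h0⟩
  | succ j ih =>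
    obtain ⟨φ, hφ⟩ := ih
    exact partII_step T' R' μ hμ hT j (hker j) φ hφ

end PartIIb

/-- Let `(G,N)` be a pair of finite groups which is nilpotent of class `t`
(`[N,_t G] = 1`, `[N,_{t−1} G] ≠ 1`) with `t ≥ c+1`, and `π : F ↠ G` a free presentation.
Then `|[N,_{t−1}G]| · |M^{(c)}(G,N)|` divides
`|M^{(c)}(G/[N,_{t−1}G], N/[N,_{t−1}G])| · |⊗^{c+1}([N,_{t−1}G], G/Z_{t−1}(N,G))|`. -/
theorem card_multiplier_dvd_of_nilpotent_high_class {G : Type} [Group G] [Finite G]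
    {F : Type} [Group F] [IsFreeGroup F] (π : F →* G) (hπ : Function.Surjective π)
    (N : Subgroup G) [N.Normal] (c t : ℕ) (hc : 1 ≤ c)
    (hnil : itComm N ⊤ t = ⊥) (hclass : itComm N ⊤ (t - 1) ≠ ⊥) (ht : c + 1 ≤ t) :
    Nat.card (itComm N ⊤ (t - 1)) * Nat.card (McPair π N c) ∣
      Nat.card (McPairQuot π N (itComm N ⊤ (t - 1)) c) *
        Nat.card (tensorPair (itComm N ⊤ (t - 1)) (G ⧸ relCenter N (t - 1)) c) := by
  classical
  have ht1 : 1 ≤ t := by omega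
  -- Notation
  let K : Subgroup G := itComm N ⊤ (t - 1)
  let Z' : Subgroup G := relCenter N (t - 1)
  let T' : Subgroup F := K.comap π
  let R' : Subgroup F := π.ker
  let S : Subgroup F := N.comap π
  let L : Subgroup F := itComm S ⊤ c
  -- basic containments
  have hT : ⁅T', ⊤⁆ ≤ R' := hTtop π N hπ ht1 hnil
  have hRT : R' ≤ T' := by
    intro x hx
    have : π x = 1 := hx
    show π x ∈ K
    rw [this]; exact one_mem K
  have hKN : K ≤ N := itComm_le_self N (t - 1)
  have hTS : T' ≤ S := Subgroup.comap_mono hKN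
  have hDcL : itComm T' ⊤ c ≤ L := itComm_mono_s8 hTS c
  have hDcR : itComm T' ⊤ c ≤ R' := by
    have h1 := vdE T' R' hT (c - 1)
    rw [itCongr T' (show c - 1 + 1 = c by omega)] at h1
    exact h1.trans (itComm_le_self R' (c - 1))
  have hEcDc : itComm R' ⊤ c ≤ itComm T' ⊤ c := itComm_mono_s8 hRT c
  -- the two Hopf-type quotients
  let H1 : Subgroup F := R' ⊓ L
  let H2 : Subgroup F := T' ⊓ L
  have hH12 : H1 ≤ H2 := inf_le_inf_right L hRT
  let A' : Subgroup ↥H1 := (itComm R' ⊤ c).subgroupOf H1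
  let B' : Subgroup ↥H2 := (itComm T' ⊤ c).subgroupOf H2
  -- rewrite the goal
  show Nat.card ↥K * Nat.card (↥H1 ⧸ A') ∣
    Nat.card (↥H2 ⧸ B') * Nat.card (tensorPair ↥K (G ⧸ Z') c)
  -- the map ι : M⁽ᶜ⁾(G,N) → M⁽ᶜ⁾(G/K, N/K)
  let j12 : ↥H1 →* ↥H2 ⧸ B' := (QuotientGroup.mk' B').comp (Subgroup.inclusion hH12)
  have hj12 : ∀ x ∈ A', j12 x = 1 := by
    intro x hx
    have hx' : (x : F) ∈ itComm R' ⊤ c := hx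
    show QuotientGroup.mk' B' (Subgroup.inclusion hH12 x) = 1
    rw [QuotientGroup.mk'_apply, QuotientGroup.eq_one_iff]
    exact hEcDc hx'
  let ι : (↥H1 ⧸ A') →* (↥H2 ⧸ B') := QuotientGroup.lift A' j12 hj12
  -- the map ψ : M⁽ᶜ⁾(G/K, N/K) → K
  let p' : ↥H2 →* ↥K := (π.comp H2.subtype).codRestrict K (fun x => x.2.1)
  have hp' : ∀ x ∈ B', p' x = 1 := by
    intro x hx
    have hx' : (x : F) ∈ itComm T' ⊤ c := hx
    apply Subtype.ext
    exact hDcR hx'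
  let ψ : (↥H2 ⧸ B') →* ↥K := QuotientGroup.lift B' p' hp'
  have hψ_surj : Function.Surjective ψ := by
    intro k
    have hKc : (k : G) ∈ itComm N ⊤ c := itComm_le_itComm N (show c ≤ t - 1 by omega) k.2
    rw [← map_itComm_comap π hπ N c] at hKc
    obtain ⟨l, hlL, hlk⟩ := hKc
    have hlT : l ∈ T' := by
      show π l ∈ K
      rw [hlk]; exact k.2
    refine ⟨QuotientGroup.mk (⟨l, ⟨hlT, hlL⟩⟩ : ↥H2), ?_⟩
    apply Subtype.ext
    exact hlk
  have hrange_ker : ι.range = ψ.ker := by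
    ext q
    constructor
    · rintro ⟨m, rfl⟩
      induction m using QuotientGroup.induction_on with | H x =>
      show ψ (j12 x) = 1
      apply Subtype.ext
      exact x.2.1
    · intro hq
      induction q using QuotientGroup.induction_on with | H y =>
      have h1 : π (y : F) = 1 := congrArg Subtype.val (hq : ψ (QuotientGroup.mk y) = 1)
      have hyH1 : (y : F) ∈ H1 := ⟨h1, y.2.2⟩
      refine ⟨QuotientGroup.mk (⟨(y : F), hyH1⟩ : ↥H1), ?_⟩
      show QuotientGroup.mk (Subgroup.inclusion hH12 ⟨(y : F), hyH1⟩) = QuotientGroup.mk y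
      congr 1
  -- surjection from Vq onto ker ι
  have hDcH1 : itComm T' ⊤ c ≤ H1 := le_inf hDcR hDcL
  let χ : ↥(itComm T' ⊤ c) →* (↥H1 ⧸ A') := (QuotientGroup.mk' A').comp
    (Subgroup.inclusion hDcH1)
  have hχ : ∀ z ∈ (itComm R' ⊤ c).subgroupOf (itComm T' ⊤ c), χ z = 1 := by
    intro z hz
    show QuotientGroup.mk' A' (Subgroup.inclusion hDcH1 z) = 1
    rw [QuotientGroup.mk'_apply, QuotientGroup.eq_one_iff]
    exact hz
  let χbar : Vq T' R' c →* (↥H1 ⧸ A') := QuotientGroup.lift _ χ hχ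
  have hχrange : χbar.range = ι.ker := by
    ext m
    constructor
    · rintro ⟨v, rfl⟩
      induction v using QuotientGroup.induction_on with | H x =>
      show ι (QuotientGroup.mk (Subgroup.inclusion hDcH1 x)) = 1
      show QuotientGroup.mk (Subgroup.inclusion hH12 (Subgroup.inclusion hDcH1 x)) = 1
      rw [QuotientGroup.eq_one_iff]
      exact x.2
    · intro hm
      induction m using QuotientGroup.induction_on with | H x =>
      have h1 : ι (QuotientGroup.mk x) = 1 := hm
      have h2 : (x : F) ∈ itComm T' ⊤ c := by
        have h3 : QuotientGroup.mk (Subgroup.inclusion hH12 x) = (1 : ↥H2 ⧸ B') := h1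
        rwa [QuotientGroup.eq_one_iff] at h3
      refine ⟨QuotientGroup.mk (⟨(x : F), h2⟩ : ↥(itComm T' ⊤ c)), ?_⟩
      show QuotientGroup.mk (Subgroup.inclusion hDcH1 ⟨(x : F), h2⟩) = QuotientGroup.mk x
      congr 1
  -- cardinality bookkeeping
  have e1 : Nat.card (↥H2 ⧸ B') = Nat.card ↥ψ.ker * Nat.card ↥K := by
    rw [Subgroup.card_eq_card_quotient_mul_card_subgroup ψ.ker,
      Nat.card_congr (QuotientGroup.quotientKerEquivOfSurjective ψ hψ_surj).toEquiv]
    ring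
  have e2 : Nat.card (↥H1 ⧸ A') = Nat.card ↥ι.ker * Nat.card ↥ι.range := by
    rw [Subgroup.card_eq_card_quotient_mul_card_subgroup ι.ker,
      Nat.card_congr (QuotientGroup.quotientKerEquivRange ι).toEquiv]
    ring
  have key : Nat.card ↥K * Nat.card (↥H1 ⧸ A') =
      Nat.card (↥H2 ⧸ B') * Nat.card ↥ι.ker := by
    rw [e1, e2, hrange_ker]
    ring
  rw [key]
  apply Nat.mul_dvd_mul_left
  -- it remains: Nat.card ↥ι.ker ∣ Nat.card (tensorPair ↥K (G ⧸ Z') c)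
  have d1 : Nat.card ↥ι.ker ∣ Nat.card (Vq T' R' c) := by
    rw [← hχrange]
    exact Subgroup.card_dvd_of_surjective χbar.rangeRestrict χbar.rangeRestrict_surjective
  -- Part II : tensor surjection
  let W' : Type := Abelianization (G ⧸ Z')
  let μ : F →* W' := Abelianization.of.comp ((QuotientGroup.mk' Z').comp π)
  have hμ : Function.Surjective μ := by
    have : ⇑μ = ⇑(Abelianization.of (G := G ⧸ Z')) ∘ (⇑(QuotientGroup.mk' Z') ∘ ⇑π) := rfl
    rw [this]
    exact abOf_surjective.comp ((QuotientGroup.mk'_surjective Z').comp hπ)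
  have hker : ∀ j : ℕ, ⁅itComm T' ⊤ j, μ.ker⁆ ≤ itComm R' ⊤ (j + 1) := by
    intro j
    have hkm : μ.ker = (commutator F ⊔ Z'.comap π) ⊔ π.ker := ker_mu π N hπ t
    rw [hkm]
    exact dcomm π N hπ ht1 hnil j
  -- the base map
  let f0 : ↥T' →* ↥K := (π.comp T'.subtype).codRestrict K (fun x => x.2)
  have hf0_surj : Function.Surjective f0 := by
    intro k
    obtain ⟨f, hf⟩ := hπ (k : G)
    have hfT : f ∈ T' := by
      show π f ∈ K
      rw [hf]; exact k.2
    exact ⟨⟨f, hfT⟩, Subtype.ext hf⟩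
  have hker0 : f0.ker = R'.subgroupOf T' := by
    ext x
    show f0 x = 1 ↔ (x : F) ∈ π.ker
    rw [Subtype.ext_iff]
    exact Iff.rfl
  let e0 : Vq T' R' 0 ≃* ↥K :=
    (QuotientGroup.quotientMulEquivOfEq hker0.symm).trans
      (QuotientGroup.quotientKerEquivOfSurjective f0 hf0_surj)
  let hom0 : ↥K →* Aq T' R' 0 := Abelianization.of.comp e0.symm.toMonoidHom
  have hhom0 : Function.Surjective hom0 := by
    have : ⇑hom0 = ⇑(Abelianization.of (G := Vq T' R' 0)) ∘ ⇑e0.symm := rfl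
    rw [this]
    exact abOf_surjective.comp e0.symm.surjective
  let lift0 : Abelianization ↥K →* Aq T' R' 0 := Abelianization.lift hom0
  have hlift0 : Function.Surjective lift0 := by
    intro b
    obtain ⟨k, hk⟩ := hhom0 b
    exact ⟨Abelianization.of k, by rw [Abelianization.lift_apply_of, hk]⟩
  let φ0 : (ModuleCat.of ℤ (AbOf ↥K)) →ₗ[ℤ] Additive (Aq T' R' 0) :=
    (MonoidHom.toAdditive lift0).toIntLinearMap
  have hφ0 : Function.Surjective φ0 := by
    intro b
    obtain ⟨a, ha⟩ := hlift0 (Additive.toMul b)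
    refine ⟨Additive.ofMul a, ?_⟩
    show Additive.ofMul (lift0 a) = b
    rw [ha]
    rfl
  obtain ⟨φc, hφc⟩ := partII_all T' R' μ hμ hT hker (ModuleCat.of ℤ (AbOf ↥K)) φ0 hφ0 c
  have d3 : Nat.card (Aq T' R' c) ∣
      Nat.card ↥(iterTensor (ModuleCat.of ℤ (AbOf ↥K)) (ModuleCat.of ℤ (Additive W')) c) := by
    have := AddSubgroup.card_dvd_of_surjective φc.toAddMonoidHom hφc
    calc Nat.card (Aq T' R' c) = Nat.card (Additive (Aq T' R' c)) :=
          Nat.card_congr Additive.ofMul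
      _ ∣ _ := this
  have d2 : Nat.card (Vq T' R' c) = Nat.card (Aq T' R' c) := by
    have hDD : ⁅itComm T' ⊤ c, itComm T' ⊤ c⁆ ≤ itComm R' ⊤ c := by
      have h1 : ⁅itComm T' ⊤ c, itComm T' ⊤ c⁆ ≤ ⁅itComm R' ⊤ (c-1), ⊤⁆ := by
        apply Subgroup.commutator_mono _ le_top
        have h2 := vdE T' R' hT (c - 1)
        rwa [itCongr T' (show c - 1 + 1 = c by omega)] at h2
      exact h1.trans (le_of_eq (by rw [← itComm_succ, itCongr R' (show c - 1 + 1 = c by omega)]))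
    letI : CommGroup (Vq T' R' c) :=
      { (inferInstance : Group (Vq T' R' c)) with
        mul_comm := by
          intro a b
          induction a using QuotientGroup.induction_on with | H x =>
          induction b using QuotientGroup.induction_on with | H y =>
          show (QuotientGroup.mk (x * y) : (itComm T' ⊤ c) ⧸ ((itComm R' ⊤ c).subgroupOf (itComm T' ⊤ c))) = QuotientGroup.mk (y * x)
          apply (QuotientGroup.eq).mpr
          have hmem : ⁅(y : F)⁻¹, (x : F)⁻¹⁆ ∈ itComm R' ⊤ c :=
            hDD (Subgroup.commutator_mem_commutator (inv_mem y.2) (inv_mem x.2))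
          show (x * y)⁻¹ * (y * x) ∈ (itComm R' ⊤ c).subgroupOf (itComm T' ⊤ c)
          rw [Subgroup.mem_subgroupOf]
          have hval : ((((x * y)⁻¹ * (y * x)) : ↥(itComm T' ⊤ c)) : F) =
              ⁅(y : F)⁻¹, (x : F)⁻¹⁆ := by
            simp only [MulMemClass.coe_mul, InvMemClass.coe_inv, commutatorElement_def]
            group
          rw [hval]
          exact hmem }
    exact Nat.card_congr (Abelianization.equivOfComm (H := Vq T' R' c)).toEquiv
  rw [d2] at d1
  exact d1.trans d3
end
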